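/- Let N_r, N_t, m be positive natural numbers, let (Ω, μ) be a probability space, and let X : Ω → Matrix (Fin N_r × Fin m) (Fin N_t × Fin m) ℂ be a random matrix such that every X ω has diagonal blocks and every entry of X is integrable and square-integrable. Let σ ≥ 0 and suppose the second-moment condition holds: for all i, j ∈ Fin N_r, k, l ∈ Fin N_t and p ∈ Fin m, ∫ conj(X ω (i,p) (k,p)) · (X ω (j,p) (l,p)) dμ = σ² if (i = j and k = l), and = 0 otherwise. Then for every deterministic Y : Matrix (Fin N_r × Fin m) (Fin N_r × Fin m) ℂ with diagonal blocks, the entrywise expectation satisfies: for all k, l ∈ Fin N_t and p, q ∈ Fin m, ∫ ((X ω)ᴴ * Y * (X ω)) (k,p) (l,q) dμ equals σ² · ∑_{i ∈ Fin N_r} Y (i,p) (i,p) if (k = l and p = q), and equals 0 otherwise. That is, E[Xᴴ Y X] = σ² · ∑_i (I_{N_t} ⊗ Y_{i,i}), a block diagonal matrix with N_t copies of the diagonal matrix ∑_i Y_{i,i}. -/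

import Mathlib

open Matrix MeasureTheory
open scoped ComplexConjugate ENNReal

/-- A block matrix (with `m × m` blocks) has diagonal blocks if every off-diagonal
entry of every block vanishes. -/
def HasDiagonalBlocks {a b m : ℕ} (X : Matrix (Fin a × Fin m) (Fin b × Fin m) ℂ) : Prop :=
  ∀ (i : Fin a) (p : Fin m) (j : Fin b) (q : Fin m), p ≠ q → X (i, p) (j, q) = 0

/-- For a random block matrix `X` with diagonal blocks and i.i.d.-type second
moments, `E[Xᴴ Y X] = σ² ∑ᵢ (I ⊗ Y i i)` for every deterministic `Y` with
diagonal blocks. -/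
theorem expectation_conjTranspose_mul_mul
    (N_r N_t m : ℕ) (hNr : 0 < N_r) (hNt : 0 < N_t) (hm : 0 < m)
    {Ω : Type*} [MeasurableSpace Ω] (μ : Measure Ω) [IsProbabilityMeasure μ]
    (X : Ω → Matrix (Fin N_r × Fin m) (Fin N_t × Fin m) ℂ)
    (hdiag : ∀ ω, HasDiagonalBlocks (X ω))
    (hint : ∀ u v, Integrable (fun ω => X ω u v) μ)
    (hsq : ∀ u v, MemLp (fun ω => X ω u v) 2 μ)
    (σ : ℝ) (hσ : 0 ≤ σ)
    (hmom : ∀ (i j : Fin N_r) (k l : Fin N_t) (p : Fin m),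
      ∫ ω, conj (X ω (i, p) (k, p)) * X ω (j, p) (l, p) ∂μ =
        if i = j ∧ k = l then ((σ : ℂ) ^ 2) else 0)
    (Y : Matrix (Fin N_r × Fin m) (Fin N_r × Fin m) ℂ) (hY : HasDiagonalBlocks Y) :
    ∀ (k l : Fin N_t) (p q : Fin m),
      ∫ ω, ((X ω)ᴴ * Y * X ω) (k, p) (l, q) ∂μ =
        if k = l ∧ p = q then ((σ : ℂ) ^ 2) * ∑ i : Fin N_r, Y (i, p) (i, p) else 0 := by
  intro k l p q
  have point : ∀ ω, ((X ω)ᴴ * Y * X ω) (k, p) (l, q)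
      = ∑ j : Fin N_r, ∑ i : Fin N_r,
          conj (X ω (i, p) (k, p)) * Y (i, p) (j, q) * X ω (j, q) (l, q) := by
    intro ω
    simp only [Matrix.mul_apply, Matrix.conjTranspose_apply, Fintype.sum_prod_type,
      Finset.sum_mul]
    refine Finset.sum_congr rfl fun j _ => ?_
    rw [Finset.sum_eq_single q]
    · refine Finset.sum_congr rfl fun i _ => ?_
      rw [Finset.sum_eq_single p]
      · rfl
      · intro r _ hr
        rw [hdiag ω i r k p hr]; simp
      · intro h; exact absurd (Finset.mem_univ p) h
    · intro s _ hs
      refine Finset.sum_eq_zero fun i _ => ?_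
      rw [hdiag ω j s l q hs]; simp
    · intro h; exact absurd (Finset.mem_univ q) h
  by_cases hpq : p = q
  · subst hpq
    have hInt : ∀ i j : Fin N_r, Integrable
        (fun ω => conj (X ω (i, p) (k, p)) * Y (i, p) (j, p) * X ω (j, p) (l, p)) μ := by
      intro i j
      have hstar : MemLp (fun ω => conj (X ω (i, p) (k, p))) 2 μ := by
        refine (hsq (i, p) (k, p)).of_le
          (Continuous.comp_aestronglyMeasurable continuous_star (hsq (i, p) (k, p)).1) ?_
        filter_upwards with ω
        simp
      have base : Integrable
          (fun ω => conj (X ω (i, p) (k, p)) * X ω (j, p) (l, p)) μ := by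
        have h2 : (1 : ENNReal) / 1 = 1 / 2 + 1 / 2 := by
          simp [one_div, ENNReal.inv_two_add_inv_two]
        have := ((hsq (j, p) (l, p)).smul (r := 1) hstar).integrable le_rfl
        simpa [smul_eq_mul, Pi.mul_def] using this
      exact (base.const_mul (Y (i, p) (j, p))).congr
        (Filter.Eventually.of_forall fun ω => by ring)
    calc ∫ ω, ((X ω)ᴴ * Y * X ω) (k, p) (l, p) ∂μ
        = ∑ j : Fin N_r, ∑ i : Fin N_r,
            ∫ ω, conj (X ω (i, p) (k, p)) * Y (i, p) (j, p) * X ω (j, p) (l, p) ∂μ := by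
          rw [integral_congr_ae (Filter.Eventually.of_forall point)]
          rw [integral_finset_sum _ (fun j _ => integrable_finset_sum _ (fun i _ => hInt i j))]
          exact Finset.sum_congr rfl fun j _ =>
            integral_finset_sum _ (fun i _ => hInt i j)
      _ = ∑ j : Fin N_r, ∑ i : Fin N_r,
            Y (i, p) (j, p) * ∫ ω, conj (X ω (i, p) (k, p)) * X ω (j, p) (l, p) ∂μ := by
          refine Finset.sum_congr rfl fun j _ => Finset.sum_congr rfl fun i _ => ?_
          rw [← integral_const_mul]
          congr 1; ext ω; ring
      _ = if k = l ∧ p = p then ((σ : ℂ) ^ 2) * ∑ i : Fin N_r, Y (i, p) (i, p) else 0 := by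
          simp only [hmom]
          by_cases hkl : k = l
          · simp [hkl, Finset.mul_sum, mul_comm]
          · simp [hkl]
  · have h0 : ∀ ω, ((X ω)ᴴ * Y * X ω) (k, p) (l, q) = 0 := by
      intro ω
      rw [point ω]
      refine Finset.sum_eq_zero fun j _ => Finset.sum_eq_zero fun i _ => ?_
      rw [hY i p j q hpq]; simp
    simp [h0, hpq]
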